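/- Let k be a commutative ring, A a k-algebra, D a k-coalgebra and ψ : D ⊗ A → A ⊗ D (written ψ(d ⊗ a) = Σ a_ψ ⊗ d^ψ) an entwining map, i.e. satisfying: ψ(d ⊗ ab) = Σ a_ψ b_φ ⊗ d^{ψφ}; ψ(d ⊗ 1) = 1 ⊗ d; Σ a_ψ ⊗ Δ(d^ψ) = Σ a_{ψφ} ⊗ d₍₁₎^φ ⊗ d₍₂₎^ψ; and Σ a_ψ ε(d^ψ) = ε(d)a. Then A ⊗ D is an A-coring: it is an A-bimodule via a'(a ⊗ d)a'' = Σ a'a a''_ψ ⊗ d^ψ, and the maps Δ_C(a ⊗ d) = Σ (a ⊗ d₍₁₎) ⊗_A (1 ⊗ d₍₂₎) and ε_C(a ⊗ d) = a ε(d) make it a coassociative counital comonoid in the category of A-bimodules. -/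
import Mathlib


open TensorProduct

noncomputable section

variable {k A D : Type*} [CommRing k] [Ring A] [Algebra k A]
  [AddCommGroup D] [Module k D] [Coalgebra k D]

/-- `ψ : D ⊗ A → A ⊗ D` is an entwining map. -/
def IsEntwining (ψ : D ⊗[k] A →ₗ[k] A ⊗[k] D) : Prop :=
  -- `ψ (d ⊗ ab) = ∑ a_ψ b_φ ⊗ d^{ψφ}`
  (ψ ∘ₗ (LinearMap.mul' k A).lTensor D =
    (LinearMap.mul' k A).rTensor D ∘ₗ (TensorProduct.assoc k A A D).symm.toLinearMap ∘ₗ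
      ψ.lTensor A ∘ₗ (TensorProduct.assoc k A D A).toLinearMap ∘ₗ
        ψ.rTensor A ∘ₗ (TensorProduct.assoc k D A A).symm.toLinearMap) ∧
  -- `ψ (d ⊗ 1) = 1 ⊗ d`
  (∀ d : D, ψ (d ⊗ₜ[k] (1 : A)) = (1 : A) ⊗ₜ[k] d) ∧
  -- `∑ a_ψ ⊗ Δ (d^ψ) = ∑ a_{ψφ} ⊗ d₍₁₎^φ ⊗ d₍₂₎^ψ`
  ((Coalgebra.comul (R := k) (A := D)).lTensor A ∘ₗ ψ =
    (TensorProduct.assoc k A D D).toLinearMap ∘ₗ ψ.rTensor D ∘ₗ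
      (TensorProduct.assoc k D A D).symm.toLinearMap ∘ₗ ψ.lTensor D ∘ₗ
        (TensorProduct.assoc k D D A).toLinearMap ∘ₗ
          (Coalgebra.comul (R := k) (A := D)).rTensor A) ∧
  -- `∑ a_ψ ε(d^ψ) = ε(d) a`
  ((TensorProduct.rid k A).toLinearMap ∘ₗ
      (Coalgebra.counit (R := k) (A := D)).lTensor A ∘ₗ ψ =
    (TensorProduct.lid k A).toLinearMap ∘ₗ (Coalgebra.counit (R := k) (A := D)).rTensor A)

/-- The right `A`-action on `A ⊗ D` induced by an entwining map:
`(a ⊗ d) · a' = ∑ a a'_ψ ⊗ d^ψ`. -/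
def rmap (ψ : D ⊗[k] A →ₗ[k] A ⊗[k] D) : (A ⊗[k] D) ⊗[k] A →ₗ[k] A ⊗[k] D :=
  (LinearMap.mul' k A).rTensor D ∘ₗ (TensorProduct.assoc k A A D).symm.toLinearMap ∘ₗ
    ψ.lTensor A ∘ₗ (TensorProduct.assoc k A D A).toLinearMap

/-- The coproduct `A ⊗ Δ` of the coring `A ⊗ D` (in the model
`(A ⊗ D) ⊗_A (A ⊗ D) ≅ (A ⊗ D) ⊗ D`). -/
def corComul : A ⊗[k] D →ₗ[k] (A ⊗[k] D) ⊗[k] D :=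
  (TensorProduct.assoc k A D D).symm.toLinearMap ∘ₗ
    (Coalgebra.comul (R := k) (A := D)).lTensor A

/-- The counit `A ⊗ ε` of the coring `A ⊗ D`. -/
def corCounit : A ⊗[k] D →ₗ[k] A :=
  (TensorProduct.rid k A).toLinearMap ∘ₗ (Coalgebra.counit (R := k) (A := D)).lTensor A

/-- The right `A`-action on `(A ⊗ D) ⊗ D ≅ (A ⊗ D) ⊗_A (A ⊗ D)`. -/
def rmap2 (ψ : D ⊗[k] A →ₗ[k] A ⊗[k] D) :
    ((A ⊗[k] D) ⊗[k] D) ⊗[k] A →ₗ[k] (A ⊗[k] D) ⊗[k] D :=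
  (rmap ψ).rTensor D ∘ₗ (TensorProduct.assoc k (A ⊗[k] D) A D).symm.toLinearMap ∘ₗ
    ψ.lTensor (A ⊗[k] D) ∘ₗ (TensorProduct.assoc k (A ⊗[k] D) D A).toLinearMap

set_option linter.unusedSectionVars false

lemma mul_rTensor_assoc (a : A) (z : A ⊗[k] D) :
    (LinearMap.mul' k A).rTensor D ((TensorProduct.assoc k A A D).symm (a ⊗ₜ[k] z)) =
      (LinearMap.mulLeft k a).rTensor D z := by
  induction z using TensorProduct.induction_on with
  | zero => simp
  | tmul b d => simp [LinearMap.mul'_apply]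
  | add u v hu hv => simp [tmul_add, hu, hv]

lemma rmap_tmul (ψ : D ⊗[k] A →ₗ[k] A ⊗[k] D) (a : A) (d : D) (b : A) :
    rmap ψ ((a ⊗ₜ[k] d) ⊗ₜ[k] b) = (LinearMap.mulLeft k a).rTensor D (ψ (d ⊗ₜ[k] b)) := by
  simp [rmap, mul_rTensor_assoc]

lemma rmap_psi (ψ : D ⊗[k] A →ₗ[k] A ⊗[k] D) (hψ : IsEntwining ψ) (d : D) (a b : A) :
    rmap ψ (ψ (d ⊗ₜ[k] a) ⊗ₜ[k] b) = ψ (d ⊗ₜ[k] (a * b)) := by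
  have := LinearMap.congr_fun hψ.1 (d ⊗ₜ[k] (a ⊗ₜ[k] b))
  simp only [LinearMap.comp_apply, LinearEquiv.coe_coe, LinearMap.lTensor_tmul,
    LinearMap.rTensor_tmul, LinearMap.mul'_apply, TensorProduct.assoc_symm_tmul] at this
  simp only [rmap, LinearMap.comp_apply, LinearEquiv.coe_coe]
  exact this.symm

lemma lmul_lmul (a b : A) (x : A ⊗[k] D) :
    (LinearMap.mulLeft k a).rTensor D ((LinearMap.mulLeft k b).rTensor D x) =
      (LinearMap.mulLeft k (a * b)).rTensor D x := by
  induction x using TensorProduct.induction_on with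
  | zero => simp
  | tmul c d => simp [mul_assoc]
  | add u v hu hv => simp [hu, hv]

lemma rmap_one (ψ : D ⊗[k] A →ₗ[k] A ⊗[k] D) (hψ : IsEntwining ψ) (x : A ⊗[k] D) :
    rmap ψ (x ⊗ₜ[k] (1 : A)) = x := by
  induction x using TensorProduct.induction_on with
  | zero => simp
  | tmul a d => simp [rmap_tmul, hψ.2.1]
  | add u v hu hv => simp [add_tmul, hu, hv]

lemma rmap_lmul (ψ : D ⊗[k] A →ₗ[k] A ⊗[k] D) (a b : A) (y : A ⊗[k] D) :
    rmap ψ (((LinearMap.mulLeft k a).rTensor D y) ⊗ₜ[k] b) =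
      (LinearMap.mulLeft k a).rTensor D (rmap ψ (y ⊗ₜ[k] b)) := by
  induction y using TensorProduct.induction_on with
  | zero => simp
  | tmul c d => simp [rmap_tmul, lmul_lmul]
  | add u v hu hv => simp [add_tmul, hu, hv]

lemma rmap_mul (ψ : D ⊗[k] A →ₗ[k] A ⊗[k] D) (hψ : IsEntwining ψ) (x : A ⊗[k] D) (a b : A) :
    rmap ψ (rmap ψ (x ⊗ₜ[k] a) ⊗ₜ[k] b) = rmap ψ (x ⊗ₜ[k] (a * b)) := by
  induction x using TensorProduct.induction_on with
  | zero => simp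
  | tmul c d => rw [rmap_tmul, rmap_lmul, rmap_psi ψ hψ, rmap_tmul]
  | add u v hu hv => simp only [add_tmul, map_add, hu, hv]




lemma corComul_tmul (a : A) (d : D) :
    corComul (a ⊗ₜ[k] d) =
      (TensorProduct.assoc k A D D).symm (a ⊗ₜ[k] Coalgebra.comul (R := k) d) := by
  simp [corComul]

lemma assoc_symm_mul (a a' : A) (y : D ⊗[k] D) :
    (TensorProduct.assoc k A D D).symm ((a * a') ⊗ₜ[k] y) =
      ((LinearMap.mulLeft k a).rTensor D).rTensor D
        ((TensorProduct.assoc k A D D).symm (a' ⊗ₜ[k] y)) := by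
  induction y using TensorProduct.induction_on with
  | zero => simp
  | tmul d₁ d₂ => simp
  | add u v hu hv => simp [tmul_add, hu, hv]

lemma corComul_lmul (a : A) (x : A ⊗[k] D) :
    corComul ((LinearMap.mulLeft k a).rTensor D x) =
      ((LinearMap.mulLeft k a).rTensor D).rTensor D (corComul x) := by
  induction x using TensorProduct.induction_on with
  | zero => simp
  | tmul a' d => simp [corComul_tmul, assoc_symm_mul]
  | add u v hu hv => simp [hu, hv]

lemma corComul_psi (ψ : D ⊗[k] A →ₗ[k] A ⊗[k] D) (hψ : IsEntwining ψ) (d : D) (a : A) :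
    corComul (ψ (d ⊗ₜ[k] a)) =
      ψ.rTensor D ((TensorProduct.assoc k D A D).symm
        (ψ.lTensor D ((TensorProduct.assoc k D D A)
          ((Coalgebra.comul (R := k) d) ⊗ₜ[k] a)))) := by
  have := LinearMap.congr_fun hψ.2.2.1 (d ⊗ₜ[k] a)
  simp only [LinearMap.comp_apply, LinearEquiv.coe_coe, LinearMap.rTensor_tmul] at this
  simp only [corComul, LinearMap.comp_apply, LinearEquiv.coe_coe, this,
    LinearEquiv.symm_apply_apply]

lemma claim6_sub (ψ : D ⊗[k] A →ₗ[k] A ⊗[k] D) (a₀ : A) (d₁ : D) (z : A ⊗[k] D) :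
    ((LinearMap.mulLeft k a₀).rTensor D).rTensor D
        (ψ.rTensor D ((TensorProduct.assoc k D A D).symm (d₁ ⊗ₜ[k] z))) =
      (rmap ψ).rTensor D
        ((TensorProduct.assoc k (A ⊗[k] D) A D).symm ((a₀ ⊗ₜ[k] d₁) ⊗ₜ[k] z)) := by
  induction z using TensorProduct.induction_on with
  | zero => simp
  | tmul b e => simp [rmap_tmul]
  | add u v hu hv => simp [tmul_add, hu, hv]

lemma claim6_aux (ψ : D ⊗[k] A →ₗ[k] A ⊗[k] D) (a₀ a : A) (y : D ⊗[k] D) :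
    ((LinearMap.mulLeft k a₀).rTensor D).rTensor D
        (ψ.rTensor D ((TensorProduct.assoc k D A D).symm
          (ψ.lTensor D ((TensorProduct.assoc k D D A) (y ⊗ₜ[k] a))))) =
      rmap2 ψ (((TensorProduct.assoc k A D D).symm (a₀ ⊗ₜ[k] y)) ⊗ₜ[k] a) := by
  induction y using TensorProduct.induction_on with
  | zero => simp [rmap2]
  | tmul d₁ d₂ =>
      simp only [assoc_tmul, LinearMap.lTensor_tmul, assoc_symm_tmul, rmap2,
        LinearMap.comp_apply, LinearEquiv.coe_coe]
      exact claim6_sub ψ a₀ d₁ (ψ (d₂ ⊗ₜ[k] a))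
  | add u v hu hv => simp only [add_tmul, tmul_add, map_add, hu, hv]

lemma corComul_rmap (ψ : D ⊗[k] A →ₗ[k] A ⊗[k] D) (hψ : IsEntwining ψ)
    (x : A ⊗[k] D) (a : A) :
    corComul (rmap ψ (x ⊗ₜ[k] a)) = rmap2 ψ ((corComul x) ⊗ₜ[k] a) := by
  induction x using TensorProduct.induction_on with
  | zero => simp [rmap2]
  | tmul a₀ d =>
      rw [rmap_tmul, corComul_lmul, corComul_psi ψ hψ, claim6_aux, corComul_tmul]
  | add u v hu hv => simp only [add_tmul, map_add, hu, hv]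

lemma claim7_L (a : A) (y : D ⊗[k] D) :
    corComul.rTensor D ((TensorProduct.assoc k A D D).symm (a ⊗ₜ[k] y)) =
      ((TensorProduct.assoc k A D D).symm.toLinearMap.rTensor D)
        ((TensorProduct.assoc k A (D ⊗[k] D) D).symm
          (a ⊗ₜ[k] ((Coalgebra.comul (R := k)).rTensor D y))) := by
  induction y using TensorProduct.induction_on with
  | zero => simp
  | tmul d₁ d₂ => simp [corComul_tmul]
  | add u v hu hv => simp [tmul_add, hu, hv]

lemma claim7_R (a : A) (y : D ⊗[k] D) :
    (TensorProduct.assoc k (A ⊗[k] D) D D).symm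
        ((Coalgebra.comul (R := k)).lTensor (A ⊗[k] D)
          ((TensorProduct.assoc k A D D).symm (a ⊗ₜ[k] y))) =
      (TensorProduct.assoc k (A ⊗[k] D) D D).symm
        ((TensorProduct.assoc k A D (D ⊗[k] D)).symm
          (a ⊗ₜ[k] ((Coalgebra.comul (R := k)).lTensor D y))) := by
  induction y using TensorProduct.induction_on with
  | zero => simp
  | tmul d₁ d₂ => simp
  | add u v hu hv => simp [tmul_add, hu, hv]

lemma claim7_JK (a : A) (w : (D ⊗[k] D) ⊗[k] D) :
    ((TensorProduct.assoc k A D D).symm.toLinearMap.rTensor D)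
        ((TensorProduct.assoc k A (D ⊗[k] D) D).symm (a ⊗ₜ[k] w)) =
      (TensorProduct.assoc k (A ⊗[k] D) D D).symm
        ((TensorProduct.assoc k A D (D ⊗[k] D)).symm
          (a ⊗ₜ[k] (TensorProduct.assoc k D D D) w)) := by
  induction w using TensorProduct.induction_on with
  | zero => simp
  | tmul y d₃ =>
      induction y using TensorProduct.induction_on with
      | zero => simp
      | tmul e₁ e₂ => simp
      | add u v hu hv => simp only [add_tmul, tmul_add, map_add, hu, hv]
  | add u v hu hv => simp only [tmul_add, map_add, hu, hv]

lemma claim7 : (corComul (k := k) (A := A) (D := D)).rTensor D ∘ₗ corComul =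
    (TensorProduct.assoc k (A ⊗[k] D) D D).symm.toLinearMap ∘ₗ
      (Coalgebra.comul (R := k) (A := D)).lTensor (A ⊗[k] D) ∘ₗ corComul := by
  apply TensorProduct.ext'
  intro a d
  simp only [LinearMap.comp_apply, LinearEquiv.coe_coe, corComul_tmul]
  rw [claim7_L, claim7_R, ← Coalgebra.coassoc_apply, claim7_JK]

lemma corCounit_tmul (a : A) (d : D) :
    corCounit (a ⊗ₜ[k] d) = Coalgebra.counit (R := k) d • a := by
  simp [corCounit]

lemma corCounit_lmul (a : A) (x : A ⊗[k] D) :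
    corCounit ((LinearMap.mulLeft k a).rTensor D x) = a * corCounit x := by
  induction x using TensorProduct.induction_on with
  | zero => simp
  | tmul a' d => simp [corCounit_tmul, mul_smul_comm]
  | add u v hu hv => simp [hu, hv, mul_add]

lemma corCounit_psi (ψ : D ⊗[k] A →ₗ[k] A ⊗[k] D) (hψ : IsEntwining ψ) (d : D) (a : A) :
    corCounit (ψ (d ⊗ₜ[k] a)) = Coalgebra.counit (R := k) d • a := by
  have := LinearMap.congr_fun hψ.2.2.2 (d ⊗ₜ[k] a)
  simp only [LinearMap.comp_apply, LinearEquiv.coe_coe, LinearMap.rTensor_tmul,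
    TensorProduct.lid_tmul] at this
  simpa [corCounit] using this

lemma corCounit_rmap (ψ : D ⊗[k] A →ₗ[k] A ⊗[k] D) (hψ : IsEntwining ψ)
    (x : A ⊗[k] D) (a : A) :
    corCounit (rmap ψ (x ⊗ₜ[k] a)) = corCounit x * a := by
  induction x using TensorProduct.induction_on with
  | zero => simp
  | tmul a₀ d =>
      rw [rmap_tmul, corCounit_lmul, corCounit_psi ψ hψ, corCounit_tmul]
      rw [mul_smul_comm, smul_mul_assoc]
  | add u v hu hv => simp only [add_tmul, map_add, hu, hv, add_mul]

lemma claim10_aux (a : A) (y : D ⊗[k] D) :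
    corCounit.rTensor D ((TensorProduct.assoc k A D D).symm (a ⊗ₜ[k] y)) =
      ((LinearMap.toSpanSingleton k A a).rTensor D)
        ((Coalgebra.counit (R := k)).rTensor D y) := by
  induction y using TensorProduct.induction_on with
  | zero => simp
  | tmul d₁ d₂ => simp [corCounit_tmul]
  | add u v hu hv => simp [tmul_add, hu, hv]

lemma claim10 : (corCounit (k := k) (A := A) (D := D)).rTensor D ∘ₗ corComul =
    LinearMap.id := by
  apply TensorProduct.ext'
  intro a d
  simp only [LinearMap.comp_apply, corComul_tmul, LinearMap.id_apply]
  rw [claim10_aux]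
  simp

lemma claim11_aux (ψ : D ⊗[k] A →ₗ[k] A ⊗[k] D) (hψ : IsEntwining ψ) (a : A)
    (y : D ⊗[k] D) :
    rmap ψ (((Algebra.linearMap k A ∘ₗ Coalgebra.counit (R := k) (A := D)).lTensor
        (A ⊗[k] D)) ((TensorProduct.assoc k A D D).symm (a ⊗ₜ[k] y))) =
      (TensorProduct.mk k A D a)
        ((TensorProduct.rid k D) ((Coalgebra.counit (R := k)).lTensor D y)) := by
  induction y using TensorProduct.induction_on with
  | zero => simp
  | tmul d₁ d₂ =>
      simp only [assoc_symm_tmul, LinearMap.lTensor_tmul, LinearMap.comp_apply,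
        Algebra.linearMap_apply, rmap_tmul, TensorProduct.rid_tmul, mk_apply]
      rw [Algebra.algebraMap_eq_smul_one, tmul_smul, map_smul, hψ.2.1, map_smul]
      simp [tmul_smul]
  | add u v hu hv => simp [tmul_add, hu, hv]

lemma claim11 (ψ : D ⊗[k] A →ₗ[k] A ⊗[k] D) (hψ : IsEntwining ψ) :
    rmap ψ ∘ₗ
        ((Algebra.linearMap k A ∘ₗ Coalgebra.counit (R := k) (A := D)).lTensor
          (A ⊗[k] D)) ∘ₗ corComul = LinearMap.id := by
  apply TensorProduct.ext'
  intro a d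
  simp only [LinearMap.comp_apply, corComul_tmul, LinearMap.id_apply]
  rw [claim11_aux ψ hψ]
  simp

theorem stmt_15 (ψ : D ⊗[k] A →ₗ[k] A ⊗[k] D) (hψ : IsEntwining ψ) :
    -- `A ⊗ D` is an `A`-bimodule: the right action is unital, associative and
    -- commutes with the left action (left multiplication on the first factor)
    (∀ x : A ⊗[k] D, rmap ψ (x ⊗ₜ[k] (1 : A)) = x) ∧
    (∀ (x : A ⊗[k] D) (a b : A),
      rmap ψ (rmap ψ (x ⊗ₜ[k] a) ⊗ₜ[k] b) = rmap ψ (x ⊗ₜ[k] (a * b))) ∧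
    (∀ (a b : A) (x : A ⊗[k] D),
      (LinearMap.mulLeft k a).rTensor D ((LinearMap.mulLeft k b).rTensor D x) =
        (LinearMap.mulLeft k (a * b)).rTensor D x) ∧
    (∀ (a b : A) (x : A ⊗[k] D),
      rmap ψ (((LinearMap.mulLeft k a).rTensor D x) ⊗ₜ[k] b) =
        (LinearMap.mulLeft k a).rTensor D (rmap ψ (x ⊗ₜ[k] b))) ∧
    -- the coproduct is `A`-bilinear
    (∀ (a : A) (x : A ⊗[k] D),
      corComul ((LinearMap.mulLeft k a).rTensor D x) =
        ((LinearMap.mulLeft k a).rTensor D).rTensor D (corComul x)) ∧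
    (∀ (x : A ⊗[k] D) (a : A),
      corComul (rmap ψ (x ⊗ₜ[k] a)) = rmap2 ψ ((corComul x) ⊗ₜ[k] a)) ∧
    -- the coproduct is coassociative
    (corComul.rTensor D ∘ₗ (corComul (k := k) (A := A) (D := D)) =
      (TensorProduct.assoc k (A ⊗[k] D) D D).symm.toLinearMap ∘ₗ
        (Coalgebra.comul (R := k) (A := D)).lTensor (A ⊗[k] D) ∘ₗ corComul) ∧
    -- the counit is `A`-bilinear and counital
    (∀ (a : A) (x : A ⊗[k] D),
      corCounit ((LinearMap.mulLeft k a).rTensor D x) = a * corCounit x) ∧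
    (∀ (x : A ⊗[k] D) (a : A), corCounit (rmap ψ (x ⊗ₜ[k] a)) = corCounit x * a) ∧
    (corCounit.rTensor D ∘ₗ (corComul (k := k) (A := A) (D := D)) = LinearMap.id) ∧
    (rmap ψ ∘ₗ
        ((Algebra.linearMap k A ∘ₗ Coalgebra.counit (R := k) (A := D)).lTensor
          (A ⊗[k] D)) ∘ₗ corComul = LinearMap.id) := by
  exact ⟨rmap_one ψ hψ, rmap_mul ψ hψ, lmul_lmul, rmap_lmul ψ, corComul_lmul,
    corComul_rmap ψ hψ, claim7, corCounit_lmul, corCounit_rmap ψ hψ, claim10,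
    claim11 ψ hψ⟩
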